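/- Let L be a field, n ≥ 2, and let u, v, δ ∈ L satisfy u(δ+1)² − (v−1)(δ+1) − 1 = 0. Then there is an isomorphism of L-algebras from the one-parameter bt-algebra E_n(u(δ+1)²) (i.e. E_n(u(δ+1)², u(δ+1)²)) onto the two-parameter bt-algebra E_n(u,v), sending the i-th braid generator T_i to R_i + δ E_i R_i and the i-th tie generator to E_i, for all i = 1, …, n−1. -/

import Mathlib

/-! The two-parameter bt-algebra `E_n(x,y)`, presented by braid generators
`R_1, …, R_{n−1}` and tie generators `E_1, …, E_{n−1}` (indexed here by `Fin (n-1)`),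
as the quotient of the free unital associative algebra by the defining relations. -/

/-- Generators of the bt-algebra: `R i` are the braid generators, `E i` the tie
generators. -/
inductive BtGen (n : ℕ) : Type
  | R : Fin (n - 1) → BtGen n
  | E : Fin (n - 1) → BtGen n

/-- The braid generator `R_i` in the free algebra. -/
noncomputable def btr (L : Type) [Field L] (n : ℕ) (i : Fin (n - 1)) :
    FreeAlgebra L (BtGen n) :=
  FreeAlgebra.ι L (BtGen.R i)

/-- The tie generator `E_i` in the free algebra. -/
noncomputable def bte (L : Type) [Field L] (n : ℕ) (i : Fin (n - 1)) :
    FreeAlgebra L (BtGen n) :=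
  FreeAlgebra.ι L (BtGen.E i)

/-- The defining relations of the two-parameter bt-algebra `E_n(x,y)`. -/
inductive BtRel (L : Type) [Field L] (x y : L) (n : ℕ) :
    FreeAlgebra L (BtGen n) → FreeAlgebra L (BtGen n) → Prop
  | comm_ee (i j : Fin (n - 1)) :
      BtRel L x y n (bte L n i * bte L n j) (bte L n j * bte L n i)
  | idem_e (i : Fin (n - 1)) :
      BtRel L x y n (bte L n i * bte L n i) (bte L n i)
  | comm_er_far (i j : Fin (n - 1)) (h : Nat.dist i.val j.val > 1) :
      BtRel L x y n (bte L n i * btr L n j) (btr L n j * bte L n i)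
  | comm_er (i : Fin (n - 1)) :
      BtRel L x y n (bte L n i * btr L n i) (btr L n i * bte L n i)
  | err (i j : Fin (n - 1)) (h : Nat.dist i.val j.val = 1) :
      BtRel L x y n (bte L n i * (btr L n j * btr L n i))
        (btr L n j * btr L n i * bte L n i)
  | eer₁ (i j : Fin (n - 1)) (h : Nat.dist i.val j.val = 1) :
      BtRel L x y n (bte L n i * bte L n j * btr L n i)
        (bte L n j * btr L n i * bte L n j)
  | eer₂ (i j : Fin (n - 1)) (h : Nat.dist i.val j.val = 1) :
      BtRel L x y n (bte L n j * btr L n i * bte L n j)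
        (btr L n i * (bte L n i * bte L n j))
  | comm_rr (i j : Fin (n - 1)) (h : Nat.dist i.val j.val > 1) :
      BtRel L x y n (btr L n i * btr L n j) (btr L n j * btr L n i)
  | braid (i j : Fin (n - 1)) (h : Nat.dist i.val j.val = 1) :
      BtRel L x y n (btr L n i * btr L n j * btr L n i)
        (btr L n j * btr L n i * btr L n j)
  | quad (i : Fin (n - 1)) :
      BtRel L x y n (btr L n i * btr L n i)
        (1 + (x - 1) • bte L n i + (y - 1) • (bte L n i * btr L n i))

/-- The two-parameter bt-algebra `E_n(x,y)`. -/
noncomputable abbrev BtAlgebra (L : Type) [Field L] (x y : L) (n : ℕ) : Type :=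
  RingQuot (BtRel L x y n)

/-- The braid generator `R_i` of `E_n(x,y)`. -/
noncomputable def BtAlgebra.R (L : Type) [Field L] (x y : L) (n : ℕ)
    (i : Fin (n - 1)) : BtAlgebra L x y n :=
  RingQuot.mkAlgHom L (BtRel L x y n) (btr L n i)

/-- The tie generator `E_i` of `E_n(x,y)`. -/
noncomputable def BtAlgebra.E (L : Type) [Field L] (x y : L) (n : ℕ)
    (i : Fin (n - 1)) : BtAlgebra L x y n :=
  RingQuot.mkAlgHom L (BtRel L x y n) (bte L n i)

/-! ### Auxiliary machinery -/

section WordLemmas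

variable {L : Type} [Field L] {A : Type} [Ring A] [Algebra L A]

private theorem tcong {w1 w2 : A} (h : w1 = w2) (x : A) : w1 * x = w2 * x := by rw [h]

/-- All consequences needed for an adjacent pair of indices. -/
theorem bt_pair_main (δ : L) (a b e f : A)
    (hee : e * e = e) (hff : f * f = f) (hfe : f * e = e * f)
    (hea : e * a = a * e) (hfb : f * b = b * f)
    (heba : e * (b * a) = b * a * e) (hfab : f * (a * b) = a * b * f)
    (hefa : e * f * a = f * a * f) (hfaf : f * a * f = a * (e * f))
    (hfeb : f * e * b = e * b * e) (hebe : e * b * e = b * (f * e))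
    (hbab : a * b * a = b * a * b) :
    ((a + δ • (e * a)) * (b + δ • (f * b)) * (a + δ • (e * a)) =
      (b + δ • (f * b)) * (a + δ • (e * a)) * (b + δ • (f * b))) ∧
    (e * ((b + δ • (f * b)) * (a + δ • (e * a))) =
      (b + δ • (f * b)) * (a + δ • (e * a)) * e) ∧
    (e * f * (a + δ • (e * a)) = f * (a + δ • (e * a)) * f) ∧
    (f * (a + δ • (e * a)) * f = (a + δ • (e * a)) * (e * f)) := by
  -- closed word lemmas, right-associated
  have w_eba : e * (b * a) = b * (a * e) := heba.trans (mul_assoc b a e)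
  have w_fab : f * (a * b) = a * (b * f) := hfab.trans (mul_assoc a b f)
  have w_faf : f * (a * f) = a * (e * f) := by rw [← mul_assoc, hfaf]
  have w_efa : e * (f * a) = a * (e * f) := by rw [← mul_assoc, hefa, hfaf]
  have w_ebe : e * (b * e) = b * (e * f) := by rw [← mul_assoc, hebe, hfe]
  have w_efb : e * (f * b) = b * (e * f) := by
    rw [← mul_assoc, ← hfe, hfeb, hebe, hfe]
  have w_ebf : e * (b * f) = b * (e * f) := by rw [← hfb, w_efb]
  have w_fae : f * (a * e) = a * (e * f) := by
    rw [← hea, ← mul_assoc, hfe, mul_assoc, w_efa]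
  have w_bab : b * (a * b) = a * (b * a) := by rw [← mul_assoc, ← hbab, mul_assoc]
  -- trailing versions
  have wt_ee : ∀ x : A, e * (e * x) = e * x := fun x => by
    simpa only [mul_assoc] using tcong hee x
  have wt_ff : ∀ x : A, f * (f * x) = f * x := fun x => by
    simpa only [mul_assoc] using tcong hff x
  have wt_fe : ∀ x : A, f * (e * x) = e * (f * x) := fun x => by
    simpa only [mul_assoc] using tcong hfe x
  have wt_ea : ∀ x : A, e * (a * x) = a * (e * x) := fun x => by
    simpa only [mul_assoc] using tcong hea x
  have wt_fb : ∀ x : A, f * (b * x) = b * (f * x) := fun x => by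
    simpa only [mul_assoc] using tcong hfb x
  have wt_eba : ∀ x : A, e * (b * (a * x)) = b * (a * (e * x)) := fun x => by
    simpa only [mul_assoc] using tcong w_eba x
  have wt_fab : ∀ x : A, f * (a * (b * x)) = a * (b * (f * x)) := fun x => by
    simpa only [mul_assoc] using tcong w_fab x
  have wt_faf : ∀ x : A, f * (a * (f * x)) = a * (e * (f * x)) := fun x => by
    simpa only [mul_assoc] using tcong w_faf x
  have wt_efa : ∀ x : A, e * (f * (a * x)) = a * (e * (f * x)) := fun x => by
    simpa only [mul_assoc] using tcong w_efa x
  have wt_ebe : ∀ x : A, e * (b * (e * x)) = b * (e * (f * x)) := fun x => by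
    simpa only [mul_assoc] using tcong w_ebe x
  have wt_efb : ∀ x : A, e * (f * (b * x)) = b * (e * (f * x)) := fun x => by
    simpa only [mul_assoc] using tcong w_efb x
  have wt_ebf : ∀ x : A, e * (b * (f * x)) = b * (e * (f * x)) := fun x => by
    simpa only [mul_assoc] using tcong w_ebf x
  have wt_fae : ∀ x : A, f * (a * (e * x)) = a * (e * (f * x)) := fun x => by
    simpa only [mul_assoc] using tcong w_fae x
  have wt_bab : ∀ x : A, b * (a * (b * x)) = a * (b * (a * x)) := fun x => by
    simpa only [mul_assoc] using tcong w_bab x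
  -- derived long rules
  have w_baef : b * (a * (e * f)) = b * (a * e) := by
    have h1 : e * (b * (e * a)) = b * (a * e) := by
      rw [hea, ← mul_assoc b a e, ← mul_assoc e (b * a) e, heba,
        mul_assoc (b * a) e e, hee, mul_assoc]
    have h2 : e * (b * (e * a)) = b * (a * (e * f)) := by
      rw [← mul_assoc b e a, ← mul_assoc e (b * e) a, ← mul_assoc e b e, hebe, hfe,
        mul_assoc b (e * f) a, mul_assoc e f a, w_efa]
    exact h2.symm.trans h1
  have wt_baef : ∀ x : A, b * (a * (e * (f * x))) = b * (a * (e * x)) := fun x => by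
    simpa only [mul_assoc] using tcong w_baef x
  have w_baeb : b * (a * (e * b)) = a * (b * (a * e)) := by
    have h1 : e * (a * (b * a)) = a * (b * (a * e)) := by
      rw [← mul_assoc e a (b * a), hea, mul_assoc a e (b * a), heba, mul_assoc b a e]
    have h2 : e * (a * (b * a)) = b * (a * (e * b)) := by
      rw [← w_bab, ← mul_assoc b a b, ← mul_assoc e (b * a) b, heba,
        mul_assoc (b * a) e b, mul_assoc b a (e * b)]
    exact h2.symm.trans h1
  have wt_baeb : ∀ x : A, b * (a * (e * (b * x))) = a * (b * (a * (e * x))) := fun x => by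
    simpa only [mul_assoc] using tcong w_baeb x
  have h2' : f * (a * (b * a)) = a * (b * (a * f)) := by
    rw [← w_bab, ← mul_assoc f b (a * b), hfb, mul_assoc b f (a * b), hfab,
      ← mul_assoc b (a * b) f, w_bab, mul_assoc a (b * a) f, mul_assoc b a f]
  have h1' : f * (a * (b * a)) = a * (b * (f * a)) := by
    rw [← mul_assoc a b a, ← mul_assoc f (a * b) a, hfab,
      mul_assoc (a * b) f a, mul_assoc a b (f * a)]
  have h3 : f * (a * (b * (a * f))) = a * (b * (a * (e * f))) := by
    rw [← mul_assoc a b (a * f), ← mul_assoc f (a * b) (a * f), hfab,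
      mul_assoc (a * b) f (a * f), w_faf, mul_assoc a b (a * (e * f))]
  have h4 : f * (a * (b * (a * f))) = a * (b * (a * f)) := by
    rw [← h2', ← mul_assoc f f (a * (b * a)), hff]
  have w_abaf : a * (b * (a * f)) = a * (b * (a * e)) :=
    (h4.symm.trans h3).trans (by rw [w_baef])
  have wt_abaf : ∀ x : A, a * (b * (a * (f * x))) = a * (b * (a * (e * x))) := fun x => by
    simpa only [mul_assoc] using tcong w_abaf x
  have w_abfa : a * (b * (f * a)) = a * (b * (a * e)) :=
    (h1'.symm.trans h2').trans w_abaf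
  have wt_abfa : ∀ x : A, a * (b * (f * (a * x))) = a * (b * (a * (e * x))) := fun x => by
    simpa only [mul_assoc] using tcong w_abfa x
  refine ⟨?_, ?_, ?_, ?_⟩
  · simp only [mul_add, add_mul, smul_mul_assoc, mul_smul_comm, smul_smul, smul_add, mul_assoc]
    simp only [hee, hff, hfe, hea, hfb, w_eba, w_fab, w_faf, w_efa, w_ebe, w_efb, w_ebf,
      w_fae, w_bab, w_baef, w_baeb, w_abaf, w_abfa,
      wt_ee, wt_ff, wt_fe, wt_ea, wt_fb, wt_eba, wt_fab, wt_faf, wt_efa, wt_ebe, wt_efb,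
      wt_ebf, wt_fae, wt_bab, wt_baef, wt_baeb, wt_abaf, wt_abfa]
    all_goals module
  · simp only [mul_add, add_mul, smul_mul_assoc, mul_smul_comm, smul_smul, smul_add, mul_assoc]
    simp only [hee, hff, hfe, hea, hfb, w_eba, w_fab, w_faf, w_efa, w_ebe, w_efb, w_ebf,
      w_fae, w_bab, w_baef, w_baeb, w_abaf, w_abfa,
      wt_ee, wt_ff, wt_fe, wt_ea, wt_fb, wt_eba, wt_fab, wt_faf, wt_efa, wt_ebe, wt_efb,
      wt_ebf, wt_fae, wt_bab, wt_baef, wt_baeb, wt_abaf, wt_abfa]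
    all_goals module
  · simp only [mul_add, add_mul, smul_mul_assoc, mul_smul_comm, smul_smul, smul_add, mul_assoc]
    simp only [hee, hff, hfe, hea, hfb, w_eba, w_fab, w_faf, w_efa, w_ebe, w_efb, w_ebf,
      w_fae, w_bab, w_baef, w_baeb, w_abaf, w_abfa,
      wt_ee, wt_ff, wt_fe, wt_ea, wt_fb, wt_eba, wt_fab, wt_faf, wt_efa, wt_ebe, wt_efb,
      wt_ebf, wt_fae, wt_bab, wt_baef, wt_baeb, wt_abaf, wt_abfa]
    all_goals module
  · simp only [mul_add, add_mul, smul_mul_assoc, mul_smul_comm, smul_smul, smul_add, mul_assoc]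
    simp only [hee, hff, hfe, hea, hfb, w_eba, w_fab, w_faf, w_efa, w_ebe, w_efb, w_ebf,
      w_fae, w_bab, w_baef, w_baeb, w_abaf, w_abfa,
      wt_ee, wt_ff, wt_fe, wt_ea, wt_fb, wt_eba, wt_fab, wt_faf, wt_efa, wt_ebe, wt_efb,
      wt_ebf, wt_fae, wt_bab, wt_baef, wt_baeb, wt_abaf, wt_abfa]
    all_goals module

/-- e commutes with `s = a + δ•(e*a)`. -/
theorem bt_single (δ : L) (a e : A) (hee : e * e = e) (hea : e * a = a * e) :
    e * (a + δ • (e * a)) = (a + δ • (e * a)) * e := by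
  have wt_ee : ∀ x : A, e * (e * x) = e * x := fun x => by
    simpa only [mul_assoc] using tcong hee x
  have wt_ea : ∀ x : A, e * (a * x) = a * (e * x) := fun x => by
    simpa only [mul_assoc] using tcong hea x
  simp only [mul_add, add_mul, smul_mul_assoc, mul_smul_comm, smul_smul, smul_add, mul_assoc]
  simp only [hee, hea, wt_ee, wt_ea]
  all_goals module

/-- the quadratic relation transforms as stated. -/
theorem bt_quad (δ x y : L) (a e : A) (hee : e * e = e) (hea : e * a = a * e)
    (hqa : a * a = 1 + (x - 1) • e + (y - 1) • (e * a)) :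
    (a + δ • (e * a)) * (a + δ • (e * a)) =
      1 + (x * (δ + 1) ^ 2 - 1) • e + ((y - 1) * (δ + 1) + 1 - 1) • (e * (a + δ • (e * a))) := by
  have wt_ee : ∀ z : A, e * (e * z) = e * z := fun z => by
    simpa only [mul_assoc] using tcong hee z
  have wt_ea : ∀ z : A, e * (a * z) = a * (e * z) := fun z => by
    simpa only [mul_assoc] using tcong hea z
  have qa_t : ∀ z : A, a * (a * z) = z + (x - 1) • (e * z) + (y - 1) • (e * (a * z)) :=
    fun z => by
      simpa only [mul_assoc, add_mul, smul_mul_assoc, one_mul] using tcong hqa z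
  simp only [mul_add, add_mul, smul_mul_assoc, mul_smul_comm, smul_smul, smul_add,
    mul_assoc, mul_one, one_mul, hqa, qa_t, hee, hea, wt_ee, wt_ea]
  match_scalars <;> ring

/-- far commutation: `e` commutes with `b + δ•(f*b)`. -/
theorem bt_far1 (δ : L) (b e f : A) (hfe : f * e = e * f) (heb : e * b = b * e)
    (hfb : f * b = b * f) :
    e * (b + δ • (f * b)) = (b + δ • (f * b)) * e := by
  have wt_fb : ∀ x : A, f * (b * x) = b * (f * x) := fun x => by
    simpa only [mul_assoc] using tcong hfb x
  have wt_eb : ∀ x : A, e * (b * x) = b * (e * x) := fun x => by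
    simpa only [mul_assoc] using tcong heb x
  simp only [mul_add, add_mul, smul_mul_assoc, mul_smul_comm, smul_smul, smul_add, mul_assoc]
  simp only [hfb, heb, hfe, wt_fb, wt_eb]
  all_goals module

/-- far commutation of the deformed generators. -/
theorem bt_far2 (δ : L) (a b e f : A) (hfe : f * e = e * f)
    (hea : e * a = a * e) (hfb : f * b = b * f)
    (heb : e * b = b * e) (hfa : f * a = a * f) (hba : b * a = a * b) :
    (a + δ • (e * a)) * (b + δ • (f * b)) = (b + δ • (f * b)) * (a + δ • (e * a)) := by
  have wt_fb : ∀ x : A, f * (b * x) = b * (f * x) := fun x => by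
    simpa only [mul_assoc] using tcong hfb x
  have wt_eb : ∀ x : A, e * (b * x) = b * (e * x) := fun x => by
    simpa only [mul_assoc] using tcong heb x
  have wt_ea : ∀ x : A, e * (a * x) = a * (e * x) := fun x => by
    simpa only [mul_assoc] using tcong hea x
  have wt_fa : ∀ x : A, f * (a * x) = a * (f * x) := fun x => by
    simpa only [mul_assoc] using tcong hfa x
  have wt_fe : ∀ x : A, f * (e * x) = e * (f * x) := fun x => by
    simpa only [mul_assoc] using tcong hfe x
  have wt_ba : ∀ x : A, b * (a * x) = a * (b * x) := fun x => by
    simpa only [mul_assoc] using tcong hba x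
  simp only [mul_add, add_mul, smul_mul_assoc, mul_smul_comm, smul_smul, smul_add, mul_assoc]
  simp only [hfb, heb, hea, hfa, hfe, hba, wt_fb, wt_eb, wt_ea, wt_fa, wt_fe, wt_ba]
  all_goals module

end WordLemmas

/-- Families satisfying the defining relations of `E_n(x,y)`. -/
structure BtSat (L : Type) [Field L] (x y : L) (n : ℕ) {A : Type} [Ring A] [Algebra L A]
    (r e : Fin (n - 1) → A) : Prop where
  comm_ee : ∀ i j, e i * e j = e j * e i
  idem : ∀ i, e i * e i = e i
  comm_er_far : ∀ i j, Nat.dist i.val j.val > 1 → e i * r j = r j * e i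
  comm_er : ∀ i, e i * r i = r i * e i
  err : ∀ i j, Nat.dist i.val j.val = 1 → e i * (r j * r i) = r j * r i * e i
  eer₁ : ∀ i j, Nat.dist i.val j.val = 1 → e i * e j * r i = e j * r i * e j
  eer₂ : ∀ i j, Nat.dist i.val j.val = 1 → e j * r i * e j = r i * (e i * e j)
  comm_rr : ∀ i j, Nat.dist i.val j.val > 1 → r i * r j = r j * r i
  braid : ∀ i j, Nat.dist i.val j.val = 1 → r i * r j * r i = r j * r i * r j
  quad : ∀ i, r i * r i = 1 + (x - 1) • e i + (y - 1) • (e i * r i)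

/-- The parameter-shifting deformation. -/
theorem BtSat.shift {L : Type} [Field L] {x y : L} {n : ℕ} {A : Type} [Ring A] [Algebra L A]
    {r e : Fin (n - 1) → A} (h : BtSat L x y n r e) (δ : L) :
    BtSat L (x * (δ + 1) ^ 2) ((y - 1) * (δ + 1) + 1) n
      (fun i => r i + δ • (e i * r i)) e where
  comm_ee := h.comm_ee
  idem := h.idem
  comm_er_far i j hij :=
    bt_far1 δ (r j) (e i) (e j) (h.comm_ee j i) (h.comm_er_far i j hij) (h.comm_er j)
  comm_er i := bt_single δ (r i) (e i) (h.idem i) (h.comm_er i)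
  err i j hij :=
    (bt_pair_main δ (r i) (r j) (e i) (e j) (h.idem i) (h.idem j) (h.comm_ee j i)
      (h.comm_er i) (h.comm_er j) (h.err i j hij)
      (h.err j i (by rwa [Nat.dist_comm])) (h.eer₁ i j hij) (h.eer₂ i j hij)
      (h.eer₁ j i (by rwa [Nat.dist_comm])) (h.eer₂ j i (by rwa [Nat.dist_comm]))
      (h.braid i j hij)).2.1
  eer₁ i j hij :=
    (bt_pair_main δ (r i) (r j) (e i) (e j) (h.idem i) (h.idem j) (h.comm_ee j i)
      (h.comm_er i) (h.comm_er j) (h.err i j hij)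
      (h.err j i (by rwa [Nat.dist_comm])) (h.eer₁ i j hij) (h.eer₂ i j hij)
      (h.eer₁ j i (by rwa [Nat.dist_comm])) (h.eer₂ j i (by rwa [Nat.dist_comm]))
      (h.braid i j hij)).2.2.1
  eer₂ i j hij :=
    (bt_pair_main δ (r i) (r j) (e i) (e j) (h.idem i) (h.idem j) (h.comm_ee j i)
      (h.comm_er i) (h.comm_er j) (h.err i j hij)
      (h.err j i (by rwa [Nat.dist_comm])) (h.eer₁ i j hij) (h.eer₂ i j hij)
      (h.eer₁ j i (by rwa [Nat.dist_comm])) (h.eer₂ j i (by rwa [Nat.dist_comm]))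
      (h.braid i j hij)).2.2.2
  comm_rr i j hij :=
    bt_far2 δ (r i) (r j) (e i) (e j) (h.comm_ee j i) (h.comm_er i) (h.comm_er j)
      (h.comm_er_far i j hij) (h.comm_er_far j i (by rwa [Nat.dist_comm]))
      (h.comm_rr i j hij).symm
  braid i j hij :=
    (bt_pair_main δ (r i) (r j) (e i) (e j) (h.idem i) (h.idem j) (h.comm_ee j i)
      (h.comm_er i) (h.comm_er j) (h.err i j hij)
      (h.err j i (by rwa [Nat.dist_comm])) (h.eer₁ i j hij) (h.eer₂ i j hij)
      (h.eer₁ j i (by rwa [Nat.dist_comm])) (h.eer₂ j i (by rwa [Nat.dist_comm]))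
      (h.braid i j hij)).1
  quad i := bt_quad δ x y (r i) (e i) (h.idem i) (h.comm_er i) (h.quad i)

/-- The evaluation of generators. -/
def btGenMap {n : ℕ} {A : Type} (r e : Fin (n - 1) → A) : BtGen n → A
  | .R i => r i
  | .E i => e i

theorem btSat_lift_rel {L : Type} [Field L] {x y : L} {n : ℕ} {A : Type} [Ring A]
    [Algebra L A] {r e : Fin (n - 1) → A} (h : BtSat L x y n r e) :
    ∀ ⦃w₁ w₂ : FreeAlgebra L (BtGen n)⦄, BtRel L x y n w₁ w₂ →
      FreeAlgebra.lift L (btGenMap r e) w₁ = FreeAlgebra.lift L (btGenMap r e) w₂ := by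
  intro w₁ w₂ hw
  induction hw with
  | comm_ee i j =>
      simp only [btr, bte, map_mul, FreeAlgebra.lift_ι_apply, btGenMap]
      exact h.comm_ee i j
  | idem_e i =>
      simp only [btr, bte, map_mul, FreeAlgebra.lift_ι_apply, btGenMap]
      exact h.idem i
  | comm_er_far i j hij =>
      simp only [btr, bte, map_mul, FreeAlgebra.lift_ι_apply, btGenMap]
      exact h.comm_er_far i j hij
  | comm_er i =>
      simp only [btr, bte, map_mul, FreeAlgebra.lift_ι_apply, btGenMap]
      exact h.comm_er i
  | err i j hij =>
      simp only [btr, bte, map_mul, FreeAlgebra.lift_ι_apply, btGenMap]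
      exact h.err i j hij
  | eer₁ i j hij =>
      simp only [btr, bte, map_mul, FreeAlgebra.lift_ι_apply, btGenMap]
      exact h.eer₁ i j hij
  | eer₂ i j hij =>
      simp only [btr, bte, map_mul, FreeAlgebra.lift_ι_apply, btGenMap]
      exact h.eer₂ i j hij
  | comm_rr i j hij =>
      simp only [btr, bte, map_mul, FreeAlgebra.lift_ι_apply, btGenMap]
      exact h.comm_rr i j hij
  | braid i j hij =>
      simp only [btr, bte, map_mul, FreeAlgebra.lift_ι_apply, btGenMap]
      exact h.braid i j hij
  | quad i =>
      simp only [btr, bte, map_mul, map_add, map_one, map_smul,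
        FreeAlgebra.lift_ι_apply, btGenMap]
      exact h.quad i

/-- The induced algebra morphism out of the bt-algebra. -/
noncomputable def BtSat.toHom {L : Type} [Field L] {x y : L} {n : ℕ} {A : Type} [Ring A]
    [Algebra L A] {r e : Fin (n - 1) → A} (h : BtSat L x y n r e) :
    BtAlgebra L x y n →ₐ[L] A :=
  RingQuot.liftAlgHom L ⟨FreeAlgebra.lift L (btGenMap r e), btSat_lift_rel h⟩

theorem BtSat.toHom_R {L : Type} [Field L] {x y : L} {n : ℕ} {A : Type} [Ring A]
    [Algebra L A] {r e : Fin (n - 1) → A} (h : BtSat L x y n r e) (i : Fin (n - 1)) :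
    h.toHom (BtAlgebra.R L x y n i) = r i := by
  simp only [BtSat.toHom, BtAlgebra.R, btr, RingQuot.liftAlgHom_mkAlgHom_apply,
    FreeAlgebra.lift_ι_apply, btGenMap]

theorem BtSat.toHom_E {L : Type} [Field L] {x y : L} {n : ℕ} {A : Type} [Ring A]
    [Algebra L A] {r e : Fin (n - 1) → A} (h : BtSat L x y n r e) (i : Fin (n - 1)) :
    h.toHom (BtAlgebra.E L x y n i) = e i := by
  simp only [BtSat.toHom, BtAlgebra.E, bte, RingQuot.liftAlgHom_mkAlgHom_apply,
    FreeAlgebra.lift_ι_apply, btGenMap]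

/-- The canonical generators satisfy the relations. -/
theorem btSat_canonical (L : Type) [Field L] (x y : L) (n : ℕ) :
    BtSat L x y n (BtAlgebra.R L x y n) (BtAlgebra.E L x y n) where
  comm_ee i j := by
    simpa only [BtAlgebra.E, map_mul] using
      RingQuot.mkAlgHom_rel L (BtRel.comm_ee (L := L) (x := x) (y := y) (n := n) i j)
  idem i := by
    simpa only [BtAlgebra.E, map_mul] using
      RingQuot.mkAlgHom_rel L (BtRel.idem_e (L := L) (x := x) (y := y) (n := n) i)
  comm_er_far i j hij := by
    simpa only [BtAlgebra.E, BtAlgebra.R, map_mul] using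
      RingQuot.mkAlgHom_rel L (BtRel.comm_er_far (L := L) (x := x) (y := y) (n := n) i j hij)
  comm_er i := by
    simpa only [BtAlgebra.E, BtAlgebra.R, map_mul] using
      RingQuot.mkAlgHom_rel L (BtRel.comm_er (L := L) (x := x) (y := y) (n := n) i)
  err i j hij := by
    simpa only [BtAlgebra.E, BtAlgebra.R, map_mul] using
      RingQuot.mkAlgHom_rel L (BtRel.err (L := L) (x := x) (y := y) (n := n) i j hij)
  eer₁ i j hij := by
    simpa only [BtAlgebra.E, BtAlgebra.R, map_mul] using
      RingQuot.mkAlgHom_rel L (BtRel.eer₁ (L := L) (x := x) (y := y) (n := n) i j hij)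
  eer₂ i j hij := by
    simpa only [BtAlgebra.E, BtAlgebra.R, map_mul] using
      RingQuot.mkAlgHom_rel L (BtRel.eer₂ (L := L) (x := x) (y := y) (n := n) i j hij)
  comm_rr i j hij := by
    simpa only [BtAlgebra.R, map_mul] using
      RingQuot.mkAlgHom_rel L (BtRel.comm_rr (L := L) (x := x) (y := y) (n := n) i j hij)
  braid i j hij := by
    simpa only [BtAlgebra.R, map_mul] using
      RingQuot.mkAlgHom_rel L (BtRel.braid (L := L) (x := x) (y := y) (n := n) i j hij)
  quad i := by
    simpa only [BtAlgebra.E, BtAlgebra.R, map_mul, map_add, map_one, map_smul] using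
      RingQuot.mkAlgHom_rel L (BtRel.quad (L := L) (x := x) (y := y) (n := n) i)
/-- if `u(δ+1)² − (v−1)(δ+1) − 1 = 0`, then the one-parameter bt-algebra
`E_n(u(δ+1)²) = E_n(u(δ+1)², u(δ+1)²)` is isomorphic, as an `L`-algebra, to the
two-parameter bt-algebra `E_n(u,v)` via `T_i ↦ R_i + δE_iR_i`, `E_i ↦ E_i`. -/
theorem bt_one_param_iso_two_param
    (L : Type) [Field L] (n : ℕ) (hn : 2 ≤ n) (u v δ : L)
    (hδ : u * (δ + 1)^2 - (v - 1) * (δ + 1) - 1 = 0) :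
    ∃ φ : BtAlgebra L (u * (δ + 1)^2) (u * (δ + 1)^2) n ≃ₐ[L] BtAlgebra L u v n,
      (∀ i : Fin (n - 1),
        φ (BtAlgebra.R L (u * (δ + 1)^2) (u * (δ + 1)^2) n i) =
          BtAlgebra.R L u v n i + δ • (BtAlgebra.E L u v n i * BtAlgebra.R L u v n i)) ∧
      (∀ i : Fin (n - 1),
        φ (BtAlgebra.E L (u * (δ + 1)^2) (u * (δ + 1)^2) n i) = BtAlgebra.E L u v n i) := by
  have hδ1 : δ + 1 ≠ 0 := by
    intro h0
    rw [h0] at hδ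
    simp at hδ
  have hxv : u * (δ + 1) ^ 2 = (v - 1) * (δ + 1) + 1 := by linear_combination hδ
  -- the forward morphism
  have S2 : BtSat L (u * (δ + 1) ^ 2) (u * (δ + 1) ^ 2) n
      (fun i => BtAlgebra.R L u v n i + δ • (BtAlgebra.E L u v n i * BtAlgebra.R L u v n i))
      (BtAlgebra.E L u v n) := by
    have h := (btSat_canonical L u v n).shift δ
    rwa [← hxv] at h
  -- the backward morphism
  have hu : (u * (δ + 1) ^ 2) * (-δ / (δ + 1) + 1) ^ 2 = u := by
    field_simp
    ring
  have hv : ((u * (δ + 1) ^ 2) - 1) * (-δ / (δ + 1) + 1) + 1 = v := by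
    field_simp
    linear_combination hδ
  have S3 : BtSat L u v n
      (fun i => BtAlgebra.R L (u * (δ + 1) ^ 2) (u * (δ + 1) ^ 2) n i +
        (-δ / (δ + 1)) • (BtAlgebra.E L (u * (δ + 1) ^ 2) (u * (δ + 1) ^ 2) n i *
          BtAlgebra.R L (u * (δ + 1) ^ 2) (u * (δ + 1) ^ 2) n i))
      (BtAlgebra.E L (u * (δ + 1) ^ 2) (u * (δ + 1) ^ 2) n) := by
    have h := (btSat_canonical L (u * (δ + 1) ^ 2) (u * (δ + 1) ^ 2) n).shift (-δ / (δ + 1))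
    rwa [hu, hv] at h
  have h1δ : (1 : L) + δ ≠ 0 := by rwa [add_comm] at hδ1
  have hzz : ((1 : L) + δ)⁻¹ * (1 + δ) = 1 := inv_mul_cancel₀ h1δ
  have comp1 : S2.toHom.comp S3.toHom = AlgHom.id L (BtAlgebra L u v n) := by
    apply RingQuot.ringQuot_ext'
    apply FreeAlgebra.hom_ext
    funext g
    simp only [Function.comp_apply, AlgHom.coe_comp, AlgHom.coe_id, id_eq]
    cases g with
    | R i =>
        show S2.toHom (S3.toHom (BtAlgebra.R L u v n i)) = BtAlgebra.R L u v n i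
        rw [S3.toHom_R, map_add, map_smul, map_mul, S2.toHom_R, S2.toHom_E]
        have hEE : BtAlgebra.E L u v n i *
            (BtAlgebra.E L u v n i * BtAlgebra.R L u v n i) =
            BtAlgebra.E L u v n i * BtAlgebra.R L u v n i := by
          rw [← mul_assoc, (btSat_canonical L u v n).idem i]
        simp only [mul_add, mul_smul_comm, hEE, smul_add, smul_smul]
        match_scalars
        · ring
        · linear_combination (-δ) * hzz
    | E i =>
        show S2.toHom (S3.toHom (BtAlgebra.E L u v n i)) = BtAlgebra.E L u v n i
        rw [S3.toHom_E, S2.toHom_E]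
  have comp2 : S3.toHom.comp S2.toHom =
      AlgHom.id L (BtAlgebra L (u * (δ + 1) ^ 2) (u * (δ + 1) ^ 2) n) := by
    apply RingQuot.ringQuot_ext'
    apply FreeAlgebra.hom_ext
    funext g
    simp only [Function.comp_apply, AlgHom.coe_comp, AlgHom.coe_id, id_eq]
    cases g with
    | R i =>
        show S3.toHom (S2.toHom (BtAlgebra.R L (u * (δ + 1) ^ 2) (u * (δ + 1) ^ 2) n i)) =
          BtAlgebra.R L (u * (δ + 1) ^ 2) (u * (δ + 1) ^ 2) n i
        rw [S2.toHom_R, map_add, map_smul, map_mul, S3.toHom_R, S3.toHom_E]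
        have hEE : BtAlgebra.E L (u * (δ + 1) ^ 2) (u * (δ + 1) ^ 2) n i *
            (BtAlgebra.E L (u * (δ + 1) ^ 2) (u * (δ + 1) ^ 2) n i *
              BtAlgebra.R L (u * (δ + 1) ^ 2) (u * (δ + 1) ^ 2) n i) =
            BtAlgebra.E L (u * (δ + 1) ^ 2) (u * (δ + 1) ^ 2) n i *
              BtAlgebra.R L (u * (δ + 1) ^ 2) (u * (δ + 1) ^ 2) n i := by
          rw [← mul_assoc, (btSat_canonical L (u * (δ + 1) ^ 2) (u * (δ + 1) ^ 2) n).idem i]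
        simp only [mul_add, mul_smul_comm, hEE, smul_add, smul_smul]
        match_scalars
        · ring
        · linear_combination (-δ) * hzz
    | E i =>
        show S3.toHom (S2.toHom (BtAlgebra.E L (u * (δ + 1) ^ 2) (u * (δ + 1) ^ 2) n i)) =
          BtAlgebra.E L (u * (δ + 1) ^ 2) (u * (δ + 1) ^ 2) n i
        rw [S2.toHom_E, S3.toHom_E]
  refine ⟨AlgEquiv.ofAlgHom S2.toHom S3.toHom comp1 comp2, fun i => ?_, fun i => ?_⟩
  · show S2.toHom (BtAlgebra.R L (u * (δ + 1) ^ 2) (u * (δ + 1) ^ 2) n i) = _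
    rw [S2.toHom_R]
  · show S2.toHom (BtAlgebra.E L (u * (δ + 1) ^ 2) (u * (δ + 1) ^ 2) n i) = _
    rw [S2.toHom_E]
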